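/- Let (H_k)_{k∈K} be a nonempty family of graphs and let G be a graph. Then G is isomorphic to an induced subgraph of a nonempty direct product of ultraproducts of members of the family (i.e., there exist a nonempty index set J and, for each j ∈ J, a nonempty index set I_j, an ultrafilter U_j on I_j, and indices k(j,i) ∈ K for i ∈ I_j such that G is isomorphic to an induced subgraph of the direct product ∏_{j∈J} (∏_{U_j} H_{k(j,i)})) if and only if the adjacency semigroup A(G) is a homomorphic image of a unary subsemigroup of a direct product of adjacency semigroups of members of the family (i.e., there exist an index set I', indices k_i ∈ K for i ∈ I', a subsemigroup T of the direct product ∏_{i∈I'} A(H_{k_i}) closed under reversion, and a surjective unary semigroup homomorphism from T onto A(G)). -/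

import Mathlib

/-- Multiplication of the adjacency semigroup `A(G)` of a graph `G = ⟨V; r⟩`:
the carrier is `Option (V × V)` with `none` playing the role of the zero element. -/
noncomputable def adjMul {V : Type*} (r : V → V → Prop) :
    Option (V × V) → Option (V × V) → Option (V × V)
  | some (x, y), some (z, t) =>
      @ite _ (r y z) (Classical.propDecidable _) (some (x, t)) none
  | _, _ => none

/-- Reversion in the adjacency semigroup: `(x,y)' = (y,x)` and `0' = 0`. -/
def adjStar {V : Type*} : Option (V × V) → Option (V × V)
  | some (x, y) => some (y, x)
  | none => none

/-- The setoid on the direct product `∀ i, W i` identifying functions that agree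
`U`-almost everywhere, for an ultrafilter `U` on `I`. -/
def uprodSetoid {I : Type*} (U : Ultrafilter I) (W : I → Type*) :
    Setoid (∀ i, W i) where
  r f g := ∀ᶠ i in (U : Filter I), f i = g i
  iseqv :=
    ⟨fun _ => Filter.Eventually.of_forall fun _ => rfl,
     fun h => h.mono fun _ hi => hi.symm,
     fun h1 h2 => (h1.and h2).mono fun _ hi => hi.1.trans hi.2⟩

/-- The edge relation of the ultraproduct graph `∏_U ⟨W i; rel i⟩`:
`[f] ∼ [g]` iff `{i : f i ∼ g i} ∈ U`. -/
def uprodRel {I : Type*} (U : Ultrafilter I) {W : I → Type*}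
    (rel : ∀ i, W i → W i → Prop) :
    Quotient (uprodSetoid U W) → Quotient (uprodSetoid U W) → Prop :=
  fun a b => ∃ f g : ∀ i, W i,
    a = Quotient.mk (uprodSetoid U W) f ∧ b = Quotient.mk (uprodSetoid U W) g ∧
    ∀ᶠ i in (U : Filter I), rel i (f i) (g i)

section Helpers
variable {V : Type*} {r : V → V → Prop}

theorem adjMul_pos {x y z t : V} (h : r y z) :
    adjMul r (some (x, y)) (some (z, t)) = some (x, t) := by
  simp [adjMul, h]

theorem adjMul_neg {x y z t : V} (h : ¬ r y z) :
    adjMul r (some (x, y)) (some (z, t)) = none := by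
  simp [adjMul, h]

theorem adjMul_none_left (b : Option (V × V)) : adjMul r none b = none := by
  rcases b with _ | ⟨z, t⟩ <;> rfl

theorem adjMul_none_right (a : Option (V × V)) : adjMul r a none = none := by
  rcases a with _ | ⟨x, y⟩ <;> rfl

theorem adjMul_eq_some {a b : Option (V × V)} {p : V × V}
    (h : adjMul r a b = some p) :
    ∃ x y z t, a = some (x, y) ∧ b = some (z, t) ∧ r y z ∧ p = (x, t) := by
  rcases a with _ | ⟨x, y⟩
  · rw [adjMul_none_left] at h; exact absurd h (by simp)
  rcases b with _ | ⟨z, t⟩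
  · rw [adjMul_none_right] at h; exact absurd h (by simp)
  by_cases hr : r y z
  · rw [adjMul_pos hr] at h
    exact ⟨x, y, z, t, rfl, rfl, hr, (Option.some_inj.mp h).symm⟩
  · rw [adjMul_neg hr] at h; exact absurd h (by simp)

theorem adjStar_some (x y : V) : adjStar (some (x, y)) = some (y, x) := rfl

theorem adjStar_none : adjStar (none : Option (V × V)) = none := rfl

theorem adjStar_eq_some {a : Option (V × V)} {x y : V}
    (h : adjStar a = some (x, y)) : a = some (y, x) := by
  rcases a with _ | ⟨u, v⟩
  · exact absurd h (by simp [adjStar])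
  · rw [adjStar_some] at h
    have h2 := Option.some_inj.mp h
    have h3 : v = x := congrArg Prod.fst h2
    have h4 : u = y := congrArg Prod.snd h2
    subst h3; subst h4; rfl
end Helpers

section Backward
universe u v w
variable {K : Type u} {W : K → Type v} {VG : Type w}

/-- pointwise product in the big direct product -/
noncomputable def pmB {I' : Type*} (rel : ∀ k, W k → W k → Prop) (k' : I' → K)
    (f g : ∀ i, Option (W (k' i) × W (k' i))) : ∀ i, Option (W (k' i) × W (k' i)) :=
  fun i => adjMul (rel (k' i)) (f i) (g i)

/-- pointwise reversion -/
def psB {I' : Type*} (k' : I' → K)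
    (f : ∀ i, Option (W (k' i) × W (k' i))) : ∀ i, Option (W (k' i) × W (k' i)) :=
  fun i => adjStar (f i)

/-- attach a separator on the right of the reversed tuple, then reverse back -/
noncomputable def sAB {I' : Type*} (rel : ∀ k, W k → W k → Prop) (k' : I' → K)
    (σf G : ∀ i, Option (W (k' i) × W (k' i))) : ∀ i, Option (W (k' i) × W (k' i)) :=
  psB k' (pmB rel k' σf (psB k' G))

/-- one step of the premise-word construction -/
noncomputable def stepB {I' : Type*} (rel : ∀ k, W k → W k → Prop) (k' : I' → K)
    (σf : ∀ i, Option (W (k' i) × W (k' i)))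
    (θ : VG → ∀ i, Option (W (k' i) × W (k' i)))
    (G : ∀ i, Option (W (k' i) × W (k' i))) (e : VG × VG) :
    ∀ i, Option (W (k' i) × W (k' i)) :=
  pmB rel k' (sAB rel k' σf G) (pmB rel k' (psB k' (θ e.1)) (θ e.2))

variable {rel : ∀ k, W k → W k → Prop} {rG : VG → VG → Prop}
variable {I' : Type (max u v w)} {k' : I' → K}
variable {B : Set (∀ i, Option (W (k' i) × W (k' i)))}
variable {φ : (∀ i, Option (W (k' i) × W (k' i))) → Option (VG × VG)}

theorem phi_const_none
    (hmul : ∀ f ∈ B, ∀ g ∈ B,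
      (fun i => adjMul (rel (k' i)) (f i) (g i)) ∈ B ∧
        φ (fun i => adjMul (rel (k' i)) (f i) (g i)) = adjMul rG (φ f) (φ g))
    (hsurj : ∀ y : Option (VG × VG), ∃ f ∈ B, φ f = y)
    {f : ∀ i, Option (W (k' i) × W (k' i))} (hf : f ∈ B)
    (hnone : ∀ i, f i = none) : φ f = none := by
  obtain ⟨g, hg, hgv⟩ := hsurj none
  have h2 := (hmul f hf g hg).2
  have h3 : (fun i => adjMul (rel (k' i)) (f i) (g i)) = f := by
    funext i; rw [hnone i, adjMul_none_left]
  rw [h3, hgv, adjMul_none_right] at h2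
  exact h2

theorem exists_some_of_phi_ne_none
    (hmul : ∀ f ∈ B, ∀ g ∈ B,
      (fun i => adjMul (rel (k' i)) (f i) (g i)) ∈ B ∧
        φ (fun i => adjMul (rel (k' i)) (f i) (g i)) = adjMul rG (φ f) (φ g))
    (hsurj : ∀ y : Option (VG × VG), ∃ f ∈ B, φ f = y)
    {f : ∀ i, Option (W (k' i) × W (k' i))} (hf : f ∈ B)
    (hn : φ f ≠ none) : ∃ i p, f i = some p := by
  by_contra h
  push_neg at h
  exact hn (phi_const_none hmul hsurj hf (fun i => Option.eq_none_iff_forall_not_mem.mpr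
    (fun p hp => h i p hp)))

theorem stepB_some {σf : ∀ i, Option (W (k' i) × W (k' i))}
    {θ : VG → ∀ i, Option (W (k' i) × W (k' i))}
    {G : ∀ i, Option (W (k' i) × W (k' i))} {e : VG × VG} {i : I'}
    {x y : W (k' i)}
    (h : stepB rel k' σf θ G e i = some (x, y)) :
    (∃ y', G i = some (x, y')) ∧
      ∃ xc jc xd jd, θ e.1 i = some (xc, jc) ∧ θ e.2 i = some (xd, jd) ∧
        rel (k' i) xc xd := by
  simp only [stepB, pmB, sAB, psB] at h
  obtain ⟨x1, y1, z, t, hA, hBk, _, hp⟩ := adjMul_eq_some h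
  have hx1 : x1 = x := (congrArg Prod.fst (Option.some_inj.mp (by rw [← hp]) : (x, y) = (x1, t))).symm
  subst hx1
  constructor
  · have hA' := adjStar_eq_some hA
    obtain ⟨m1, m2, z2, t2, _, hG', _, hp2⟩ := adjMul_eq_some hA'
    have ht2 : t2 = x1 := (congrArg Prod.snd hp2).symm
    subst ht2
    have := adjStar_eq_some hG'
    exact ⟨z2, this⟩
  · obtain ⟨u1, u2, v1, v2, hth1, hth2, hrel3, _⟩ := adjMul_eq_some hBk
    exact ⟨u2, u1, v1, v2, adjStar_eq_some hth1, hth2, hrel3⟩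

theorem foldl_someB {σf : ∀ i, Option (W (k' i) × W (k' i))}
    {θ : VG → ∀ i, Option (W (k' i) × W (k' i))} :
    ∀ (l : List (VG × VG)) (G : ∀ i, Option (W (k' i) × W (k' i))) (i : I')
      (x y : W (k' i)),
      (l.foldl (stepB rel k' σf θ) G) i = some (x, y) →
      (∃ y', G i = some (x, y')) ∧
        ∀ e ∈ l, ∃ xc jc xd jd, θ e.1 i = some (xc, jc) ∧ θ e.2 i = some (xd, jd) ∧
          rel (k' i) xc xd := by
  intro l
  induction l with
  | nil => intro G i x y h; exact ⟨⟨y, h⟩, fun e he => absurd he List.not_mem_nil⟩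
  | cons e tl ih =>
    intro G i x y h
    rw [List.foldl_cons] at h
    obtain ⟨⟨y', hGe⟩, htl⟩ := ih (stepB rel k' σf θ G e) i x y h
    obtain ⟨hG, hee⟩ := stepB_some hGe
    refine ⟨hG, ?_⟩
    intro e' he'
    rcases List.mem_cons.mp he' with h1 | h2
    · subst h1; exact hee
    · exact htl e' h2

theorem foldl_memB
    (hmul : ∀ f ∈ B, ∀ g ∈ B,
      (fun i => adjMul (rel (k' i)) (f i) (g i)) ∈ B ∧
        φ (fun i => adjMul (rel (k' i)) (f i) (g i)) = adjMul rG (φ f) (φ g))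
    (hstar : ∀ f ∈ B,
      (fun i => adjStar (f i)) ∈ B ∧ φ (fun i => adjStar (f i)) = adjStar (φ f))
    {σf : ∀ i, Option (W (k' i) × W (k' i))}
    {θ : VG → ∀ i, Option (W (k' i) × W (k' i))}
    {pS qS : VG} {b₀ : VG}
    (hσB : σf ∈ B) (hσv : φ σf = some (pS, pS))
    (hθB : ∀ c, θ c ∈ B) (hθv : ∀ c, φ (θ c) = some (c, qS))
    (hpq : rG pS qS) :
    ∀ (l : List (VG × VG)), (∀ e ∈ l, rG e.1 e.2) →
      ∀ G, G ∈ B → φ G = some (b₀, qS) →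
      (l.foldl (stepB rel k' σf θ) G) ∈ B ∧
        φ (l.foldl (stepB rel k' σf θ) G) = some (b₀, qS) := by
  intro l
  induction l with
  | nil => intro _ G hG hGv; exact ⟨hG, hGv⟩
  | cons e tl ih =>
    intro hrel G hG hGv
    rw [List.foldl_cons]
    have he : rG e.1 e.2 := hrel e List.mem_cons_self
    have htl : ∀ e' ∈ tl, rG e'.1 e'.2 := fun e' h' => hrel e' (List.mem_cons_of_mem _ h')
    -- step G e ∈ B with the right φ value
    have h1B : psB k' G ∈ B := (hstar G hG).1
    have h1V : φ (psB k' G) = some (qS, b₀) := by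
      have := (hstar G hG).2
      rw [hGv, adjStar_some] at this
      exact this
    have h2B : pmB rel k' σf (psB k' G) ∈ B := (hmul _ hσB _ h1B).1
    have h2V : φ (pmB rel k' σf (psB k' G)) = some (pS, b₀) := by
      have := (hmul _ hσB _ h1B).2
      rw [hσv, h1V, adjMul_pos hpq] at this
      exact this
    have h3B : sAB rel k' σf G ∈ B := (hstar _ h2B).1
    have h3V : φ (sAB rel k' σf G) = some (b₀, pS) := by
      have := (hstar _ h2B).2
      rw [h2V, adjStar_some] at this
      exact this
    have h4B : psB k' (θ e.1) ∈ B := (hstar _ (hθB e.1)).1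
    have h4V : φ (psB k' (θ e.1)) = some (qS, e.1) := by
      have := (hstar _ (hθB e.1)).2
      rw [hθv e.1, adjStar_some] at this
      exact this
    have h5B : pmB rel k' (psB k' (θ e.1)) (θ e.2) ∈ B := (hmul _ h4B _ (hθB e.2)).1
    have h5V : φ (pmB rel k' (psB k' (θ e.1)) (θ e.2)) = some (qS, qS) := by
      have := (hmul _ h4B _ (hθB e.2)).2
      rw [h4V, hθv e.2, adjMul_pos he] at this
      exact this
    have h6B : stepB rel k' σf θ G e ∈ B := (hmul _ h3B _ h5B).1
    have h6V : φ (stepB rel k' σf θ G e) = some (b₀, qS) := by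
      have := (hmul _ h3B _ h5B).2
      rw [h3V, h5V, adjMul_pos hpq] at this
      exact this
    exact ih htl _ h6B h6V

/-- The key construction: a tuple `P` mapping onto `(b₀,a₀)` whose nonzero
components yield assignments realizing all edges of `F` with prescribed values
at `a₀` and `b₀`. -/
theorem key_lemma
    (hmul : ∀ f ∈ B, ∀ g ∈ B,
      (fun i => adjMul (rel (k' i)) (f i) (g i)) ∈ B ∧
        φ (fun i => adjMul (rel (k' i)) (f i) (g i)) = adjMul rG (φ f) (φ g))
    (hstar : ∀ f ∈ B,
      (fun i => adjStar (f i)) ∈ B ∧ φ (fun i => adjStar (f i)) = adjStar (φ f))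
    (hsurj : ∀ y : Option (VG × VG), ∃ f ∈ B, φ f = y)
    (F : Finset VG) (a₀ b₀ : VG)
    (hcase : a₀ ≠ b₀ ∨ ∃ p q, p ∈ F ∧ q ∈ F ∧ rG p q) :
    ∃ P, P ∈ B ∧ φ P = some (b₀, a₀) ∧
      ∀ (i : I') (x y : W (k' i)), P i = some (x, y) →
        ∃ w : VG → W (k' i),
          (∀ a b, a ∈ F → b ∈ F → rG a b → rel (k' i) (w a) (w b)) ∧
          w a₀ = y ∧ w b₀ = x := by
  classical
  set L : List (VG × VG) := ((F ×ˢ F).filter fun p => rG p.1 p.2).toList with hLdef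
  have hLmem : ∀ {a b : VG}, a ∈ F → b ∈ F → rG a b → (a, b) ∈ L := by
    intro a b ha hb hab
    rw [hLdef, Finset.mem_toList, Finset.mem_filter, Finset.mem_product]
    exact ⟨⟨ha, hb⟩, hab⟩
  have hLrel : ∀ e ∈ L, rG e.1 e.2 := by
    intro e he
    rw [hLdef, Finset.mem_toList, Finset.mem_filter] at he
    exact he.2
  rcases hL0 : L with _ | ⟨⟨pS, qS⟩, tl⟩
  · -- no edges inside F
    have hne : a₀ ≠ b₀ := by
      rcases hcase with h | ⟨p, q, hp, hq, hpq⟩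
      · exact h
      · exact absurd (hL0 ▸ hLmem hp hq hpq) List.not_mem_nil
    obtain ⟨P, hPB, hPv⟩ := hsurj (some (b₀, a₀))
    refine ⟨P, hPB, hPv, ?_⟩
    intro i x y _
    refine ⟨fun c => if c = a₀ then y else x, ?_, ?_, ?_⟩
    · intro a b ha hb hab
      exact absurd (hL0 ▸ hLmem ha hb hab) List.not_mem_nil
    · simp
    · simp only [if_neg (fun h : b₀ = a₀ => hne h.symm)]
  · -- there is an edge (pS, qS) inside F
    have hpq : rG pS qS :=
      hLrel _ (hL0 ▸ List.mem_cons_self (a := ((pS, qS) : VG × VG)) (l := tl))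
    obtain ⟨σf, hσB, hσv⟩ := hsurj (some (pS, pS))
    choose θ hθB hθv using fun c : VG => hsurj (some (c, qS))
    set body := L.foldl (stepB rel k' σf θ) (θ b₀) with hbody
    obtain ⟨hbodyB, hbodyV⟩ :=
      foldl_memB hmul hstar hσB hσv hθB hθv hpq L hLrel (θ b₀) (hθB b₀) (hθv b₀)
    rw [← hbody] at hbodyB hbodyV
    -- Gfin := (sAB body) * (θ a₀)'
    have h1B : psB k' body ∈ B := (hstar _ hbodyB).1
    have h1V : φ (psB k' body) = some (qS, b₀) := by
      have := (hstar _ hbodyB).2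
      rw [hbodyV, adjStar_some] at this; exact this
    have h2B : pmB rel k' σf (psB k' body) ∈ B := (hmul _ hσB _ h1B).1
    have h2V : φ (pmB rel k' σf (psB k' body)) = some (pS, b₀) := by
      have := (hmul _ hσB _ h1B).2
      rw [hσv, h1V, adjMul_pos hpq] at this; exact this
    have hsB : sAB rel k' σf body ∈ B := (hstar _ h2B).1
    have hsV : φ (sAB rel k' σf body) = some (b₀, pS) := by
      have := (hstar _ h2B).2
      rw [h2V, adjStar_some] at this; exact this
    have htaB : psB k' (θ a₀) ∈ B := (hstar _ (hθB a₀)).1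
    have htaV : φ (psB k' (θ a₀)) = some (qS, a₀) := by
      have := (hstar _ (hθB a₀)).2
      rw [hθv a₀, adjStar_some] at this; exact this
    refine ⟨pmB rel k' (sAB rel k' σf body) (psB k' (θ a₀)),
      (hmul _ hsB _ htaB).1, ?_, ?_⟩
    · have := (hmul _ hsB _ htaB).2
      rw [hsV, htaV, adjMul_pos hpq] at this; exact this
    · intro i x y hxy
      -- decompose the final product
      have hxy' : adjMul (rel (k' i)) (sAB rel k' σf body i) (psB k' (θ a₀) i)
          = some (x, y) := hxy
      obtain ⟨x1, y1, z, t, hA, hTa, _, hp⟩ := adjMul_eq_some hxy'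
      have hx1 : x = x1 := congrArg Prod.fst hp
      have ht : y = t := congrArg Prod.snd hp
      subst hx1; subst ht
      -- θ a₀ i = some (y, z)
      have hθa : θ a₀ i = some (y, z) := adjStar_eq_some hTa
      -- body i = some (x, _)
      have hbodyi : ∃ y', body i = some (x, y') := by
        have hA' := adjStar_eq_some (hA :
          adjStar (adjMul (rel (k' i)) (σf i) (adjStar (body i))) = some (x, y1))
        obtain ⟨m1, m2, z2, t2, _, hG', _, hp2⟩ := adjMul_eq_some hA'
        have ht2 : x = t2 := congrArg Prod.snd hp2
        subst ht2
        exact ⟨z2, adjStar_eq_some hG'⟩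
      obtain ⟨y', hbodyi⟩ := hbodyi
      obtain ⟨⟨j0, hθb⟩, hedges⟩ := foldl_someB L (θ b₀) i x y' hbodyi
      -- the assignment
      refine ⟨fun c => ((θ c) i).elim x Prod.fst, ?_, ?_, ?_⟩
      · intro a b ha hb hab
        obtain ⟨xc, jc, xd, jd, h1, h2, h3⟩ := hedges (a, b) (hLmem ha hb hab)
        simp only [h1, h2, Option.elim]
        exact h3
      · simp only [hθa, Option.elim]
      · simp only [hθb, Option.elim]


/-- FS for non-edge tasks -/
theorem FS_ne
    (hmul : ∀ f ∈ B, ∀ g ∈ B,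
      (fun i => adjMul (rel (k' i)) (f i) (g i)) ∈ B ∧
        φ (fun i => adjMul (rel (k' i)) (f i) (g i)) = adjMul rG (φ f) (φ g))
    (hstar : ∀ f ∈ B,
      (fun i => adjStar (f i)) ∈ B ∧ φ (fun i => adjStar (f i)) = adjStar (φ f))
    (hsurj : ∀ y : Option (VG × VG), ∃ f ∈ B, φ f = y)
    (F : Finset VG) (a₀ b₀ : VG) (hne : ¬ rG a₀ b₀) :
    ∃ (k : K) (w : VG → W k),
      (∀ a b, a ∈ F → b ∈ F → rG a b → rel k (w a) (w b)) ∧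
        ¬ rel k (w a₀) (w b₀) := by
  by_contra hcon
  push_neg at hcon
  by_cases hok : a₀ ≠ b₀ ∨ ∃ p q, p ∈ F ∧ q ∈ F ∧ rG p q
  · obtain ⟨P, hPB, hPv, hext⟩ := key_lemma hmul hstar hsurj F a₀ b₀ hok
    have hPP : (fun i => adjMul (rel (k' i)) (P i) (P i)) = P := by
      funext i
      rcases hPi : P i with _ | ⟨x, y⟩
      · rw [adjMul_none_left]
      · obtain ⟨w, hw, hwa, hwb⟩ := hext i x y hPi
        have hr := hcon (k' i) w hw
        rw [hwa, hwb] at hr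
        exact adjMul_pos hr
    have h2 := (hmul P hPB P hPB).2
    rw [hPP, hPv, adjMul_neg hne] at h2
    exact absurd h2 (by simp)
  · -- a₀ = b₀ and no edges inside F : sandwich P·P'·P = P
    push_neg at hok
    obtain ⟨hab, hFe⟩ := hok
    subst hab
    obtain ⟨P, hPB, hPv⟩ := hsurj (some (a₀, a₀))
    have hloops : ∀ (i : I') (u : W (k' i)), rel (k' i) u u := by
      intro i u
      have := hcon (k' i) (fun _ => u) (by
        intro a b ha hb hab0
        exact (hFe a b ha hb hab0).elim)
      exact this
    have h1B : psB k' P ∈ B := (hstar _ hPB).1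
    have h1V : φ (psB k' P) = some (a₀, a₀) := by
      have := (hstar _ hPB).2
      rw [hPv, adjStar_some] at this; exact this
    have h2B : pmB rel k' P (psB k' P) ∈ B := (hmul _ hPB _ h1B).1
    have h2V : φ (pmB rel k' P (psB k' P)) = none := by
      have := (hmul _ hPB _ h1B).2
      rw [hPv, h1V, adjMul_neg hne] at this; exact this
    have h3V : φ (pmB rel k' (pmB rel k' P (psB k' P)) P) = none := by
      have := (hmul _ h2B _ hPB).2
      rw [h2V, adjMul_none_left] at this; exact this
    have hTP : pmB rel k' (pmB rel k' P (psB k' P)) P = P := by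
      funext i
      show adjMul (rel (k' i)) (adjMul (rel (k' i)) (P i) (adjStar (P i))) (P i) = P i
      rcases hPi : P i with _ | ⟨x, y⟩
      · rw [adjStar_none, adjMul_none_left, adjMul_none_left]
      · rw [adjStar_some, adjMul_pos (hloops i y), adjMul_pos (hloops i x)]
    rw [hTP, hPv] at h3V
    exact absurd h3V (by simp)

/-- FS for separation tasks -/
theorem FS_sep
    (hmul : ∀ f ∈ B, ∀ g ∈ B,
      (fun i => adjMul (rel (k' i)) (f i) (g i)) ∈ B ∧
        φ (fun i => adjMul (rel (k' i)) (f i) (g i)) = adjMul rG (φ f) (φ g))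
    (hstar : ∀ f ∈ B,
      (fun i => adjStar (f i)) ∈ B ∧ φ (fun i => adjStar (f i)) = adjStar (φ f))
    (hsurj : ∀ y : Option (VG × VG), ∃ f ∈ B, φ f = y)
    (F : Finset VG) (a₀ b₀ : VG) (hne : a₀ ≠ b₀) :
    ∃ (k : K) (w : VG → W k),
      (∀ a b, a ∈ F → b ∈ F → rG a b → rel k (w a) (w b)) ∧
        w a₀ ≠ w b₀ := by
  by_contra hcon
  push_neg at hcon
  obtain ⟨P, hPB, hPv, hext⟩ := key_lemma hmul hstar hsurj F a₀ b₀ (Or.inl hne)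
  have hPs : (fun i => adjStar (P i)) = P := by
    funext i
    rcases hPi : P i with _ | ⟨x, y⟩
    · rw [adjStar_none]
    · obtain ⟨w, hw, hwa, hwb⟩ := hext i x y hPi
      have heq := hcon (k' i) w hw
      rw [hwa, hwb] at heq
      rw [adjStar_some, heq]
  have h2 := (hstar P hPB).2
  rw [hPs, hPv, adjStar_some] at h2
  have := Option.some_inj.mp h2
  exact hne (congrArg Prod.snd this)

/-- FS for the trivial task -/
theorem FS_dummy
    (hmul : ∀ f ∈ B, ∀ g ∈ B,
      (fun i => adjMul (rel (k' i)) (f i) (g i)) ∈ B ∧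
        φ (fun i => adjMul (rel (k' i)) (f i) (g i)) = adjMul rG (φ f) (φ g))
    (hstar : ∀ f ∈ B,
      (fun i => adjStar (f i)) ∈ B ∧ φ (fun i => adjStar (f i)) = adjStar (φ f))
    (hsurj : ∀ y : Option (VG × VG), ∃ f ∈ B, φ f = y)
    (v₀ : VG) (F : Finset VG) :
    ∃ (k : K) (w : VG → W k),
      ∀ a b, a ∈ F → b ∈ F → rG a b → rel k (w a) (w b) := by
  by_cases hFe : ∃ p q, p ∈ F ∧ q ∈ F ∧ rG p q
  · obtain ⟨P, hPB, hPv, hext⟩ := key_lemma hmul hstar hsurj F v₀ v₀ (Or.inr hFe)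
    obtain ⟨i, ⟨x, y⟩, hPi⟩ :=
      exists_some_of_phi_ne_none hmul hsurj hPB (by rw [hPv]; simp)
    obtain ⟨w, hw, _, _⟩ := hext i x y hPi
    exact ⟨k' i, w, hw⟩
  · obtain ⟨P, hPB, hPv⟩ := hsurj (some (v₀, v₀))
    obtain ⟨i, ⟨x, y⟩, _⟩ :=
      exists_some_of_phi_ne_none hmul hsurj hPB (by rw [hPv]; simp)
    refine ⟨k' i, fun _ => x, ?_⟩
    intro a b ha hb hab
    exact (hFe ⟨a, b, ha, hb, hab⟩).elim

end Backward

section FS2LHS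
universe u v w
variable {K : Type u} {W : K → Type v} {VG : Type w}
variable {rel : ∀ k, W k → W k → Prop} {rG : VG → VG → Prop}

theorem FS_to_LHS
    (hFSd : ∀ F : Finset VG, ∃ (k : K) (w : VG → W k),
      ∀ a b, a ∈ F → b ∈ F → rG a b → rel k (w a) (w b))
    (hFSn : ∀ (F : Finset VG) (a₀ b₀ : VG), ¬ rG a₀ b₀ →
      ∃ (k : K) (w : VG → W k),
        (∀ a b, a ∈ F → b ∈ F → rG a b → rel k (w a) (w b)) ∧
          ¬ rel k (w a₀) (w b₀))
    (hFSs : ∀ (F : Finset VG) (a₀ b₀ : VG), a₀ ≠ b₀ →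
      ∃ (k : K) (w : VG → W k),
        (∀ a b, a ∈ F → b ∈ F → rG a b → rel k (w a) (w b)) ∧
          w a₀ ≠ w b₀) :
    ∃ (J : Type (max u v w)) (_ : Nonempty J)
        (If : J → Type (max u v w)) (_ : ∀ j, Nonempty (If j))
        (Uf : ∀ j, Ultrafilter (If j)) (k : ∀ j, If j → K)
        (e : VG → ∀ j, Quotient (uprodSetoid (Uf j) (fun i => W (k j i)))),
        Function.Injective e ∧
        ∀ a b : VG, rG a b ↔
          ∀ j, uprodRel (Uf j) (fun i => rel (k j i)) (e a j) (e b j) := by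
  classical
  -- combined finite-satisfiability data
  have hALL : ∀ (t : ((VG × VG) ⊕ (VG × VG)) ⊕ PUnit.{w+1}) (F : Finset VG),
      ∃ (k : K) (w : VG → W k),
        (∀ a b, a ∈ F → b ∈ F → rG a b → rel k (w a) (w b)) ∧
        (∀ p : VG × VG, t = Sum.inl (Sum.inl p) →
          rG p.1 p.2 ∨ ¬ rel k (w p.1) (w p.2)) ∧
        (∀ p : VG × VG, t = Sum.inl (Sum.inr p) → p.1 = p.2 ∨ w p.1 ≠ w p.2) := by
    intro t F
    rcases t with (⟨a, b⟩ | ⟨a, b⟩) | _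
    · by_cases h : rG a b
      · obtain ⟨k, w, hw⟩ := hFSd F
        refine ⟨k, w, hw, ?_, ?_⟩
        · rintro p hp
          obtain rfl : (a, b) = p := by
            have := Sum.inl.inj (Sum.inl.inj hp); exact this
          exact Or.inl h
        · rintro p hp; exact absurd (Sum.inl.inj hp) (by simp)
      · obtain ⟨k, w, hw, hne⟩ := hFSn F a b h
        refine ⟨k, w, hw, ?_, ?_⟩
        · rintro p hp
          obtain rfl : (a, b) = p := Sum.inl.inj (Sum.inl.inj hp)
          exact Or.inr hne
        · rintro p hp; exact absurd (Sum.inl.inj hp) (by simp)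
    · by_cases h : a = b
      · obtain ⟨k, w, hw⟩ := hFSd F
        refine ⟨k, w, hw, ?_, ?_⟩
        · rintro p hp; exact absurd (Sum.inl.inj hp) (by simp)
        · rintro p hp
          obtain rfl : (a, b) = p := Sum.inr.inj (Sum.inl.inj hp)
          exact Or.inl h
      · obtain ⟨k, w, hw, hne⟩ := hFSs F a b h
        refine ⟨k, w, hw, ?_, ?_⟩
        · rintro p hp; exact absurd (Sum.inl.inj hp) (by simp)
        · rintro p hp
          obtain rfl : (a, b) = p := Sum.inr.inj (Sum.inl.inj hp)
          exact Or.inr hne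
    · obtain ⟨k, w, hw⟩ := hFSd F
      exact ⟨k, w, hw, fun p hp => by simp at hp, fun p hp => by simp at hp⟩
  choose kk ww hw1 hw2 hw3 using hALL
  -- the index data
  haveI : Nonempty (Finset VG) := ⟨∅⟩
  haveI hNB : (Filter.map (ULift.up.{max u v}) (Filter.atTop : Filter (Finset VG))).NeBot :=
    Filter.NeBot.map Filter.atTop_neBot _
  set UF : Ultrafilter (ULift.{max u v} (Finset VG)) :=
    Ultrafilter.of (Filter.map ULift.up Filter.atTop) with hUF
  have hBase : ∀ F₀ : Finset VG, {i : ULift.{max u v} (Finset VG) | F₀ ⊆ i.down} ∈ UF := by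
    intro F₀
    apply Ultrafilter.of_le
    rw [Filter.mem_map]
    exact Filter.mem_atTop F₀
  refine ⟨ULift.{max u v} (((VG × VG) ⊕ (VG × VG)) ⊕ PUnit.{w+1}),
    ⟨⟨Sum.inr PUnit.unit⟩⟩,
    fun _ => ULift.{max u v} (Finset VG),
    fun _ => ⟨⟨∅⟩⟩,
    fun _ => UF,
    fun j i => kk j.down i.down,
    fun a j => Quotient.mk _ (fun i => ww j.down i.down a),
    ?_, ?_⟩
  · -- injectivity
    intro a b hab
    by_contra hne
    have hj := congrFun hab (ULift.up (Sum.inl (Sum.inr (a, b))))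
    have hae : ∀ᶠ i in (UF : Filter (ULift.{max u v} (Finset VG))),
        ww (Sum.inl (Sum.inr (a, b))) i.down a = ww (Sum.inl (Sum.inr (a, b))) i.down b :=
      Quotient.exact hj
    obtain ⟨i, hi⟩ := hae.exists
    have := hw3 (Sum.inl (Sum.inr (a, b))) i.down (a, b) rfl
    rcases this with h | h
    · exact hne h
    · exact h hi
  · -- induced-subgraph condition
    intro a b
    constructor
    · intro hab j
      refine ⟨fun i => ww j.down i.down a, fun i => ww j.down i.down b, rfl, rfl, ?_⟩
      have hev : ∀ᶠ i in (UF : Filter (ULift.{max u v} (Finset VG))), ({a, b} : Finset VG) ⊆ i.down :=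
        hBase {a, b}
      exact hev.mono fun i hi =>
        hw1 j.down i.down a b (hi (Finset.mem_insert_self _ _))
          (hi (Finset.mem_insert_of_mem (Finset.mem_singleton_self _))) hab
    · intro h
      by_contra hne
      obtain ⟨f, g, hf, hg, hrel⟩ := h (ULift.up (Sum.inl (Sum.inl (a, b))))
      have h1 : ∀ᶠ i in (UF : Filter (ULift.{max u v} (Finset VG))),
          ww (Sum.inl (Sum.inl (a, b))) i.down a = f i := Quotient.exact hf
      have h2 : ∀ᶠ i in (UF : Filter (ULift.{max u v} (Finset VG))),
          ww (Sum.inl (Sum.inl (a, b))) i.down b = g i := Quotient.exact hg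
      obtain ⟨i, ⟨ha', hb'⟩, hr⟩ := ((h1.and h2).and hrel).exists
      have := hw2 (Sum.inl (Sum.inl (a, b))) i.down (a, b) rfl
      rcases this with h' | h'
      · exact hne h'
      · exact h' (by rw [ha', hb']; exact hr)

end FS2LHS

section Forward
universe u v w
variable {K : Type u} {W : K → Type v} {VG : Type w}
variable {rel : ∀ k, W k → W k → Prop} {rG : VG → VG → Prop}
variable {J : Type (max u v w)} {If : J → Type (max u v w)}
variable (Uf : ∀ j, Ultrafilter (If j)) (k : ∀ j, If j → K)

/-- a column of the tuple is almost-everywhere defined, with total witnesses -/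
def colGood (f : ∀ p : Σ j, If j, Option (W (k p.1 p.2) × W (k p.1 p.2))) (j : J) :
    Prop :=
  ∃ gh : (∀ i, W (k j i)) × (∀ i, W (k j i)),
    ∀ᶠ i in (Uf j : Filter (If j)), f ⟨j, i⟩ = some (gh.1 i, gh.2 i)

/-- the pair of ultraproduct classes of a good column -/
noncomputable def colC {f : ∀ p : Σ j, If j, Option (W (k p.1 p.2) × W (k p.1 p.2))}
    {j : J} (h : colGood Uf k f j) :
    Quotient (uprodSetoid (Uf j) (fun i => W (k j i))) ×
      Quotient (uprodSetoid (Uf j) (fun i => W (k j i))) :=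
  (Quotient.mk _ h.choose.1, Quotient.mk _ h.choose.2)

theorem colC_spec {f : ∀ p : Σ j, If j, Option (W (k p.1 p.2) × W (k p.1 p.2))}
    {j : J} (h : colGood Uf k f j)
    (gh : (∀ i, W (k j i)) × (∀ i, W (k j i)))
    (hgh : ∀ᶠ i in (Uf j : Filter (If j)), f ⟨j, i⟩ = some (gh.1 i, gh.2 i)) :
    colC Uf k h = (Quotient.mk _ gh.1, Quotient.mk _ gh.2) := by
  have hch := h.choose_spec
  have hb := hch.and hgh
  have h1 : ∀ᶠ i in (Uf j : Filter (If j)), h.choose.1 i = gh.1 i := by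
    refine hb.mono fun i ⟨hi1, hi2⟩ => ?_
    have := Option.some_inj.mp (hi1.symm.trans hi2)
    exact congrArg Prod.fst this
  have h2 : ∀ᶠ i in (Uf j : Filter (If j)), h.choose.2 i = gh.2 i := by
    refine hb.mono fun i ⟨hi1, hi2⟩ => ?_
    have := Option.some_inj.mp (hi1.symm.trans hi2)
    exact congrArg Prod.snd this
  unfold colC
  exact Prod.ext (Quotient.sound h1) (Quotient.sound h2)

/-- the homomorphism from the big product onto the adjacency semigroup of the
product of the ultraproducts -/
noncomputable def thetaF
    (f : ∀ p : Σ j, If j, Option (W (k p.1 p.2) × W (k p.1 p.2))) :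
    Option ((∀ j, Quotient (uprodSetoid (Uf j) (fun i => W (k j i)))) ×
      (∀ j, Quotient (uprodSetoid (Uf j) (fun i => W (k j i))))) :=
  @dite _ (∀ j, colGood Uf k f j) (Classical.propDecidable _)
    (fun h => some (fun j => (colC Uf k (h j)).1, fun j => (colC Uf k (h j)).2))
    (fun _ => none)

theorem thetaF_pos {f : ∀ p : Σ j, If j, Option (W (k p.1 p.2) × W (k p.1 p.2))}
    (h : ∀ j, colGood Uf k f j) :
    thetaF Uf k f
      = some (fun j => (colC Uf k (h j)).1, fun j => (colC Uf k (h j)).2) := by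
  unfold thetaF
  rw [dif_pos h]

theorem thetaF_neg {f : ∀ p : Σ j, If j, Option (W (k p.1 p.2) × W (k p.1 p.2))}
    (h : ¬ ∀ j, colGood Uf k f j) : thetaF Uf k f = none := by
  unfold thetaF
  rw [dif_neg h]


theorem colGood_star_iff
    {f : ∀ p : Σ j, If j, Option (W (k p.1 p.2) × W (k p.1 p.2))} {j : J} :
    colGood Uf k (fun p => adjStar (f p)) j ↔ colGood Uf k f j := by
  constructor
  · rintro ⟨⟨g, h⟩, hae⟩
    refine ⟨(h, g), hae.mono fun i hi => ?_⟩
    exact adjStar_eq_some hi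
  · rintro ⟨⟨g, h⟩, hae⟩
    refine ⟨(h, g), hae.mono fun i hi => ?_⟩
    show adjStar (f ⟨j, i⟩) = _
    rw [hi]; rfl

theorem colGood_mul
    {f g : ∀ p : Σ j, If j, Option (W (k p.1 p.2) × W (k p.1 p.2))} {j : J}
    (hm : colGood Uf k (fun p => adjMul (rel (k p.1 p.2)) (f p) (g p)) j) :
    colGood Uf k f j ∧ colGood Uf k g j := by
  classical
  obtain ⟨⟨u, v⟩, hae⟩ := hm
  constructor
  · refine ⟨(u, fun i =>
      if h' : ∃ m, f ⟨j, i⟩ = some (u i, m) then h'.choose else v i), ?_⟩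
    refine hae.mono fun i hi => ?_
    obtain ⟨x, y, z, t, hfv, _, _, hp⟩ := adjMul_eq_some hi
    have hx : u i = x := congrArg Prod.fst hp
    subst hx
    have h' : ∃ m, f ⟨j, i⟩ = some (u i, m) := ⟨y, hfv⟩
    simp only [dif_pos h']
    exact h'.choose_spec
  · refine ⟨(fun i =>
      if h' : ∃ m, g ⟨j, i⟩ = some (m, v i) then h'.choose else u i, v), ?_⟩
    refine hae.mono fun i hi => ?_
    obtain ⟨x, y, z, t, _, hgv, _, hp⟩ := adjMul_eq_some hi
    have ht : v i = t := congrArg Prod.snd hp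
    subst ht
    have h' : ∃ m, g ⟨j, i⟩ = some (m, v i) := ⟨z, hgv⟩
    simp only [dif_pos h']
    exact h'.choose_spec

theorem thetaF_star
    (f : ∀ p : Σ j, If j, Option (W (k p.1 p.2) × W (k p.1 p.2))) :
    thetaF Uf k (fun p => adjStar (f p)) = adjStar (thetaF Uf k f) := by
  by_cases h : ∀ j, colGood Uf k f j
  · have h' : ∀ j, colGood Uf k (fun p => adjStar (f p)) j :=
      fun j => (colGood_star_iff Uf k).mpr (h j)
    have hsw : ∀ j, ∀ᶠ i in (Uf j : Filter (If j)),
        (fun p => adjStar (f p)) (⟨j, i⟩ : Σ j, If j)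
          = some ((h j).choose.2 i, (h j).choose.1 i) := by
      intro j
      exact (h j).choose_spec.mono fun i hi => by
        show adjStar (f ⟨j, i⟩) = _
        rw [hi, adjStar_some]
    rw [thetaF_pos Uf k h', thetaF_pos Uf k h, adjStar_some]
    refine congrArg some (Prod.ext ?_ ?_) <;> funext j
    · have := colC_spec Uf k (h' j) ((h j).choose.2, (h j).choose.1) (hsw j)
      exact congrArg Prod.fst this
    · have := colC_spec Uf k (h' j) ((h j).choose.2, (h j).choose.1) (hsw j)
      exact congrArg Prod.snd this
  · have h' : ¬ ∀ j, colGood Uf k (fun p => adjStar (f p)) j :=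
      fun hc => h (fun j => (colGood_star_iff Uf k).mp (hc j))
    rw [thetaF_neg Uf k h', thetaF_neg Uf k h, adjStar_none]

theorem thetaF_mul
    (f g : ∀ p : Σ j, If j, Option (W (k p.1 p.2) × W (k p.1 p.2))) :
    thetaF Uf k (fun p => adjMul (rel (k p.1 p.2)) (f p) (g p)) =
      adjMul (fun u0 v0 : ∀ j, Quotient (uprodSetoid (Uf j) (fun i => W (k j i))) =>
          ∀ j, uprodRel (Uf j) (fun i => rel (k j i)) (u0 j) (v0 j))
        (thetaF Uf k f) (thetaF Uf k g) := by
  by_cases hf : ∀ j, colGood Uf k f j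
  · by_cases hg : ∀ j, colGood Uf k g j
    · rw [thetaF_pos Uf k hf, thetaF_pos Uf k hg]
      by_cases hrel : ∀ j, uprodRel (Uf j) (fun i => rel (k j i))
          ((colC Uf k (hf j)).2) ((colC Uf k (hg j)).1)
      · rw [adjMul_pos hrel]
        have hall2 : ∀ j, ∀ᶠ i in (Uf j : Filter (If j)),
            (fun p => adjMul (rel (k p.1 p.2)) (f p) (g p)) (⟨j, i⟩ : Σ j, If j)
              = some ((hf j).choose.1 i, (hg j).choose.2 i) := by
          intro j
          obtain ⟨s, t, hs, ht, hrelst⟩ := hrel j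
          have h1 : ∀ᶠ i in (Uf j : Filter (If j)), (hf j).choose.2 i = s i :=
            Quotient.exact hs
          have h2 : ∀ᶠ i in (Uf j : Filter (If j)), (hg j).choose.1 i = t i :=
            Quotient.exact ht
          refine ((((hf j).choose_spec.and (hg j).choose_spec).and
            ((h1.and h2).and hrelst))).mono ?_
          rintro i ⟨⟨hif, hig⟩, ⟨⟨hi1, hi2⟩, hir⟩⟩
          show adjMul (rel (k j i)) (f ⟨j, i⟩) (g ⟨j, i⟩) = _
          rw [hif, hig]
          have : rel (k j i) ((hf j).choose.2 i) ((hg j).choose.1 i) := by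
            rw [hi1, hi2]; exact hir
          exact adjMul_pos this
        have hall : ∀ j, colGood Uf k
            (fun p => adjMul (rel (k p.1 p.2)) (f p) (g p)) j :=
          fun j => ⟨((hf j).choose.1, (hg j).choose.2), hall2 j⟩
        rw [thetaF_pos Uf k hall]
        refine congrArg some (Prod.ext ?_ ?_) <;> funext j
        · have hA := colC_spec Uf k (hall j) ((hf j).choose.1, (hg j).choose.2) (hall2 j)
          show (colC Uf k (hall j)).1 = (colC Uf k (hf j)).1
          rw [hA]; rfl
        · have hA := colC_spec Uf k (hall j) ((hf j).choose.1, (hg j).choose.2) (hall2 j)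
          show (colC Uf k (hall j)).2 = (colC Uf k (hg j)).2
          rw [hA]; rfl
      · rw [adjMul_neg hrel]
        apply thetaF_neg
        intro hall
        apply hrel
        intro j
        obtain ⟨⟨u0, v0⟩, hae⟩ := hall j
        have hcomb := ((hf j).choose_spec.and (hg j).choose_spec).and hae
        refine ⟨(hf j).choose.2, (hg j).choose.1, rfl, rfl, ?_⟩
        refine hcomb.mono ?_
        rintro i ⟨⟨hif, hig⟩, him⟩
        obtain ⟨x, y, z, t, hfv, hgv, hr, _⟩ := adjMul_eq_some him
        have h1 := Option.some_inj.mp (hif.symm.trans hfv)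
        have h2 := Option.some_inj.mp (hig.symm.trans hgv)
        have e1 : (hf j).choose.2 i = y := congrArg Prod.snd h1
        have e2 : (hg j).choose.1 i = z := congrArg Prod.fst h2
        rw [e1, e2]
        exact hr
    · rw [thetaF_neg Uf k hg, adjMul_none_right]
      apply thetaF_neg
      intro hall
      apply hg
      intro j
      exact (colGood_mul Uf k (hall j)).2
  · rw [thetaF_neg Uf k hf, adjMul_none_left]
    apply thetaF_neg
    intro hall
    apply hf
    intro j
    exact (colGood_mul Uf k (hall j)).1


theorem LHS_to_RHS
    (e : VG → ∀ j, Quotient (uprodSetoid (Uf j) (fun i => W (k j i))))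
    (hinj : Function.Injective e)
    (hiff : ∀ a b : VG, rG a b ↔
      ∀ j, uprodRel (Uf j) (fun i => rel (k j i)) (e a j) (e b j))
    (hJ : Nonempty J) :
    ∃ (I' : Type (max u v w)) (k' : I' → K)
        (B : Set (∀ i, Option (W (k' i) × W (k' i))))
        (φ : (∀ i, Option (W (k' i) × W (k' i))) → Option (VG × VG)),
        (∀ f ∈ B, ∀ g ∈ B,
          (fun i => adjMul (rel (k' i)) (f i) (g i)) ∈ B ∧
            φ (fun i => adjMul (rel (k' i)) (f i) (g i)) = adjMul rG (φ f) (φ g)) ∧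
        (∀ f ∈ B,
          (fun i => adjStar (f i)) ∈ B ∧
            φ (fun i => adjStar (f i)) = adjStar (φ f)) ∧
        (∀ y : Option (VG × VG), ∃ f ∈ B, φ f = y) := by
  classical
  set ι : Option (VG × VG) →
      Option ((∀ j, Quotient (uprodSetoid (Uf j) (fun i => W (k j i)))) ×
        (∀ j, Quotient (uprodSetoid (Uf j) (fun i => W (k j i))))) :=
    Option.map (fun p : VG × VG => (e p.1, e p.2)) with hιdef
  have hιinj : Function.Injective ι := by
    apply Option.map_injective
    intro p q hpq
    exact Prod.ext (hinj (congrArg Prod.fst hpq)) (hinj (congrArg Prod.snd hpq))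
  have hK4 : ∀ y1 y2 : Option (VG × VG),
      adjMul (fun u0 v0 : ∀ j, Quotient (uprodSetoid (Uf j) (fun i => W (k j i))) =>
          ∀ j, uprodRel (Uf j) (fun i => rel (k j i)) (u0 j) (v0 j)) (ι y1) (ι y2)
        = ι (adjMul rG y1 y2) := by
    rintro (_ | ⟨a, b⟩) (_ | ⟨c, d⟩)
    · rfl
    · rfl
    · show adjMul _ _ none = _
      rw [adjMul_none_right, adjMul_none_right]; rfl
    · show adjMul _ (some (e a, e b)) (some (e c, e d)) = ι (adjMul rG (some (a, b)) (some (c, d)))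
      by_cases h : rG b c
      · rw [adjMul_pos ((hiff b c).mp h), adjMul_pos h]; rfl
      · rw [adjMul_neg (fun hR => h ((hiff b c).mpr hR)), adjMul_neg h]; rfl
  have hK5 : ∀ y : Option (VG × VG), adjStar (ι y) = ι (adjStar y) := by
    rintro (_ | ⟨a, b⟩) <;> rfl
  have hφeq : ∀ (f : ∀ p : Σ j, If j, Option (W (k p.1 p.2) × W (k p.1 p.2)))
      (y : Option (VG × VG)), thetaF Uf k f = ι y →
      (@dite _ (∃ y', thetaF Uf k f = ι y') (Classical.propDecidable _)
        (fun h => h.choose) (fun _ => none)) = y := by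
    intro f y hy
    have hex : ∃ y', thetaF Uf k f = ι y' := ⟨y, hy⟩
    rw [dif_pos hex]
    exact hιinj (hex.choose_spec.symm.trans hy)
  refine ⟨Σ j, If j, fun p => k p.1 p.2,
    {f | ∃ y, thetaF Uf k f = ι y},
    fun f => @dite _ (∃ y, thetaF Uf k f = ι y) (Classical.propDecidable _)
      (fun h => h.choose) (fun _ => none), ?_, ?_, ?_⟩
  · -- multiplication
    intro f hf g hg
    obtain ⟨y1, hy1⟩ := hf
    obtain ⟨y2, hy2⟩ := hg
    have hm : thetaF Uf k (fun p => adjMul (rel (k p.1 p.2)) (f p) (g p))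
        = ι (adjMul rG y1 y2) := by
      rw [thetaF_mul, hy1, hy2, hK4]
    constructor
    · exact ⟨_, hm⟩
    · show (@dite _ _ (Classical.propDecidable _) _ _ : Option (VG × VG)) = _
      rw [hφeq _ _ hm]
      beta_reduce
      rw [hφeq f y1 hy1, hφeq g y2 hy2]
  · -- reversion
    intro f hf
    obtain ⟨y1, hy1⟩ := hf
    have hm : thetaF Uf k (fun p => adjStar (f p)) = ι (adjStar y1) := by
      rw [thetaF_star, hy1, hK5]
    constructor
    · exact ⟨_, hm⟩
    · show (@dite _ _ (Classical.propDecidable _) _ _ : Option (VG × VG)) = _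
      rw [hφeq _ _ hm]
      beta_reduce
      rw [hφeq f y1 hy1]
  · -- surjectivity
    rintro (_ | ⟨a, b⟩)
    · have hθ : thetaF Uf k (fun _ => none) = ι none := by
        have : thetaF Uf k
            (fun _ : Σ j, If j => (none : Option (W (k _ _) × W (k _ _)))) = none := by
          apply thetaF_neg
          intro hall
          obtain ⟨⟨g0, h0⟩, hae⟩ := hall hJ.some
          obtain ⟨i, hi⟩ := hae.exists
          exact absurd hi (by simp)
        rw [this]; rfl
      exact ⟨fun _ => none, ⟨none, hθ⟩, hφeq _ none hθ⟩
    · set f : ∀ p : Σ j, If j, Option (W (k p.1 p.2) × W (k p.1 p.2)) :=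
        fun p => some ((e a p.1).out p.2, (e b p.1).out p.2) with hfdef
      have hall : ∀ j, colGood Uf k f j :=
        fun j => ⟨((e a j).out, (e b j).out), Filter.Eventually.of_forall fun i => rfl⟩
      have hθ : thetaF Uf k f = ι (some (a, b)) := by
        have h1 : thetaF Uf k f = some (e a, e b) := by
          rw [thetaF_pos Uf k hall]
          refine congrArg some (Prod.ext ?_ ?_) <;> funext j
          · have hA := colC_spec Uf k (hall j) ((e a j).out, (e b j).out)
              (Filter.Eventually.of_forall fun i => rfl)
            show (colC Uf k (hall j)).1 = e a j
            rw [hA]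
            exact Quotient.out_eq _
          · have hA := colC_spec Uf k (hall j) ((e a j).out, (e b j).out)
              (Filter.Eventually.of_forall fun i => rfl)
            show (colC Uf k (hall j)).2 = e b j
            rw [hA]
            exact Quotient.out_eq _
        rw [h1]; rfl
      exact ⟨f, ⟨some (a, b), hθ⟩, hφeq _ _ hθ⟩

end Forward

/-- Theorem: a graph `G = ⟨VG; rG⟩` lies in the universal Horn class generated
by a nonempty family of graphs `(⟨W k; rel k⟩)_{k : K}` — that is, `G` is
isomorphic to an induced subgraph of a nonempty direct product of ultraproducts
of members of the family — if and only if the adjacency semigroup `A(G)` lies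
in the variety generated by the adjacency semigroups of the family — that is,
`A(G)` is a homomorphic image of a subsemigroup, closed under reversion, of a
direct product of adjacency semigroups of members of the family. -/
theorem graph_in_uH_iff_adjacency_in_variety
    {K : Type u} [Nonempty K] {W : K → Type v} (rel : ∀ k, W k → W k → Prop)
    {VG : Type w} (rG : VG → VG → Prop) :
    (∃ (J : Type (max u v w)) (_ : Nonempty J)
        (If : J → Type (max u v w)) (_ : ∀ j, Nonempty (If j))
        (Uf : ∀ j, Ultrafilter (If j)) (k : ∀ j, If j → K)
        (e : VG → ∀ j, Quotient (uprodSetoid (Uf j) (fun i => W (k j i)))),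
        Function.Injective e ∧
        ∀ a b : VG, rG a b ↔
          ∀ j, uprodRel (Uf j) (fun i => rel (k j i)) (e a j) (e b j)) ↔
    (∃ (I' : Type (max u v w)) (k' : I' → K)
        (B : Set (∀ i, Option (W (k' i) × W (k' i))))
        (φ : (∀ i, Option (W (k' i) × W (k' i))) → Option (VG × VG)),
        (∀ f ∈ B, ∀ g ∈ B,
          (fun i => adjMul (rel (k' i)) (f i) (g i)) ∈ B ∧
            φ (fun i => adjMul (rel (k' i)) (f i) (g i)) = adjMul rG (φ f) (φ g)) ∧
        (∀ f ∈ B,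
          (fun i => adjStar (f i)) ∈ B ∧
            φ (fun i => adjStar (f i)) = adjStar (φ f)) ∧
        (∀ y : Option (VG × VG), ∃ f ∈ B, φ f = y)) := by
  constructor
  · rintro ⟨J, hJ, If, hIf, Uf, k, e, hinj, hiff⟩
    exact LHS_to_RHS Uf k e hinj hiff hJ
  · rintro ⟨I', k', B, φ, hmul, hstar, hsurj⟩
    by_cases hVG : Nonempty VG
    · obtain ⟨v₀⟩ := hVG
      exact FS_to_LHS
        (fun F => FS_dummy hmul hstar hsurj v₀ F)
        (fun F a₀ b₀ h => FS_ne hmul hstar hsurj F a₀ b₀ h)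
        (fun F a₀ b₀ h => FS_sep hmul hstar hsurj F a₀ b₀ h)
    · rw [not_nonempty_iff] at hVG
      refine ⟨PUnit, ⟨PUnit.unit⟩, fun _ => PUnit, fun _ => ⟨PUnit.unit⟩,
        fun _ => (pure PUnit.unit : Ultrafilter PUnit),
        fun _ _ => Classical.arbitrary K,
        fun a => (hVG.false a).elim, ?_, ?_⟩
      · intro a
        exact (hVG.false a).elim
      · intro a
        exact (hVG.false a).elim
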